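/- Let X be a real Banach space, κ an uncountable regular cardinal, and {x_α}_{α<κ} a sequence of norm-one vectors in X which is weakly null (i.e. for every f ∈ X* and ε>0 there is β<κ with |f(x_α)|<ε whenever β<α<κ). Then there exists a strictly increasing map σ ↦ α_σ from κ to κ such that {x_{α_σ}}_{σ<κ} is a monotone transfinite basic sequence. -/

import Mathlib

open Cardinal Ordinal Set Pointwise

universe u

noncomputable def closedSpan {X : Type u} [SeminormedAddCommGroup X] [NormedSpace ℝ X]
    (s : Set X) : Submodule ℝ X :=
  (Submodule.span ℝ s).topologicalClosure

/-- transfinite basic sequence with constant C -/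
def IsBasicSeqWithConst {X : Type u} [SeminormedAddCommGroup X] [NormedSpace ℝ X]
    (x : Ordinal.{u} → X) (θ : Ordinal.{u}) (C : ℝ) : Prop :=
  1 ≤ C ∧ (∀ α < θ, x α ≠ 0) ∧
  ∀ lam < θ, ∀ y ∈ closedSpan (x '' {α | α < lam}),
    ∀ z ∈ closedSpan (x '' {α | lam ≤ α ∧ α < θ}), ‖y‖ ≤ C * ‖y + z‖

def IsWeaklyNull {X : Type u} [SeminormedAddCommGroup X] [NormedSpace ℝ X]
    (x : Ordinal.{u} → X) (θ : Ordinal.{u}) : Prop :=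
  ∀ f : X →L[ℝ] ℝ, ∀ ε > (0:ℝ), ∃ β < θ, ∀ α, β < α → α < θ → |f (x α)| < ε

lemma mk_qspan_le {X : Type u} [AddCommGroup X] [Module ℚ X] (s : Set X) :
    #(Submodule.span ℚ s) ≤ max #s ℵ₀ := by
  rcases s.eq_empty_or_nonempty with rfl | hs
  · rw [Submodule.span_empty]
    have : Subsingleton (⊥ : Submodule ℚ X) := inferInstance
    exact le_trans (Cardinal.le_one_iff_subsingleton.2 this)
      (le_max_of_le_right Cardinal.one_le_aleph0)
  · haveI : Nonempty s := hs.to_subtype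
    have hrange : LinearMap.range (Finsupp.linearCombination ℚ ((↑) : s → X))
        = Submodule.span ℚ s := by
      rw [Finsupp.range_linearCombination, Subtype.range_coe]
    have hsurj : ∀ v : ↥(Submodule.span ℚ s), ∃ c : (↥s →₀ ℚ),
        Finsupp.linearCombination ℚ ((↑) : s → X) c = ↑v := by
      intro v
      have : (v : X) ∈ LinearMap.range (Finsupp.linearCombination ℚ ((↑) : s → X)) := by
        rw [hrange]; exact v.2
      exact this
    choose c hc using hsurj
    have hinj : Function.Injective c := by
      intro v w hvw
      have : (v : X) = w := by rw [← hc v, ← hc w, hvw]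
      exact Subtype.ext this
    have h1 : #↥(Submodule.span ℚ s) ≤ #(↥s →₀ ℚ) := Cardinal.mk_le_of_injective hinj
    have h2 : #(↥s →₀ ℚ) = max (Cardinal.lift.{0} #↥s) (Cardinal.lift.{u} #ℚ) :=
      Cardinal.mk_finsupp_lift_of_infinite' ↥s ℚ
    rw [h2] at h1
    refine h1.trans (max_le_max ?_ ?_)
    · simp
    · exact Cardinal.lift_le_aleph0.2 (Cardinal.mk_le_aleph0)

lemma closedSpan_subset_closure_qspan {X : Type u} [NormedAddCommGroup X] [NormedSpace ℝ X]
    [Module ℚ X] [IsScalarTower ℚ ℝ X] (s : Set X) :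
    (closedSpan s : Set X) ⊆ closure (Submodule.span ℚ s : Set X) := by
  set Q : Set X := (Submodule.span ℚ s : Set X) with hQdef
  have h1 : ∀ (q : ℚ) (w : X), (q : ℝ) • w = q • w := by
    intro q w
    rw [← Rat.smul_one_eq_cast ℝ q, smul_assoc, one_smul]
  have hqsmul : ∀ (q : ℚ), ∀ v ∈ closure Q, (q : ℝ) • v ∈ closure Q := by
    intro q v hv
    exact map_mem_closure (continuous_const_smul ((q : ℝ))) hv
      (fun w hw => by rw [h1 q w]; exact Submodule.smul_mem _ q hw)
  have hsmul : ∀ (r : ℝ), ∀ v ∈ closure Q, r • v ∈ closure Q := by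
    intro r v hv
    have hr : r ∈ closure (Set.range ((↑) : ℚ → ℝ)) := Rat.denseRange_cast r
    have hcont : Continuous (fun t : ℝ => t • v) := continuous_id.smul continuous_const
    have hmap : Set.MapsTo (fun t : ℝ => t • v) (Set.range ((↑) : ℚ → ℝ)) (closure Q) := by
      rintro t ⟨q, rfl⟩
      exact hqsmul q v hv
    have := map_mem_closure hcont hr hmap
    rwa [closure_closure] at this
  let T : Submodule ℝ X :=
    { carrier := closure Q
      zero_mem' := subset_closure (Submodule.zero_mem _)
      add_mem' := fun ha hb => map_mem_closure₂ continuous_add ha hb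
        (fun a ha b hb => Submodule.add_mem _ ha hb)
      smul_mem' := fun r v hv => hsmul r v hv }
  have hle : closedSpan s ≤ T := by
    apply Submodule.topologicalClosure_minimal
    · rw [Submodule.span_le]
      exact fun v hv => subset_closure (Submodule.subset_span hv)
    · exact isClosed_closure
  exact fun v hv => hle hv

lemma eventually_zero {X : Type u} [NormedAddCommGroup X] [NormedSpace ℝ X]
    {κ : Cardinal.{u}} (hreg : κ.IsRegular) (hunc : ℵ₀ < κ)
    {x : Ordinal.{u} → X} (hnull : IsWeaklyNull x κ.ord) (f : X →L[ℝ] ℝ) :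
    ∃ β < κ.ord, ∀ α, β < α → α < κ.ord → f (x α) = 0 := by
  have h : ∀ n : ℕ, ∃ β, β < κ.ord ∧ ∀ α, β < α → α < κ.ord →
      |f (x α)| < 1 / ((n : ℝ) + 1) := by
    intro n
    obtain ⟨β, hβ, hb⟩ := hnull f (1 / ((n : ℝ) + 1)) (by positivity)
    exact ⟨β, hβ, hb⟩
  choose g hg1 hg2 using h
  refine ⟨⨆ n, g n, ?_, ?_⟩
  · apply Ordinal.iSup_lt_ord_lift ?_ hg1
    rw [hreg.cof_eq]
    simpa using hunc
  · intro α hβα hα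
    have habs : ∀ n : ℕ, |f (x α)| < 1 / ((n : ℝ) + 1) := fun n =>
      hg2 n α ((Ordinal.le_iSup g n).trans_lt hβα) hα
    by_contra hne
    obtain ⟨n, hn⟩ := exists_nat_one_div_lt (abs_pos.2 hne)
    exact absurd (habs n) (not_lt.2 hn.le)

theorem stmt0 {X : Type u} [NormedAddCommGroup X] [NormedSpace ℝ X] [CompleteSpace X]
    (κ : Cardinal.{u}) (hreg : κ.IsRegular) (hunc : ℵ₀ < κ)
    (x : Ordinal.{u} → X) (hnorm : ∀ α < κ.ord, ‖x α‖ = 1)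
    (hnull : IsWeaklyNull x κ.ord) :
    ∃ φ : Ordinal.{u} → Ordinal.{u}, StrictMonoOn φ (Set.Iio κ.ord) ∧
      (∀ σ < κ.ord, φ σ < κ.ord) ∧
      IsBasicSeqWithConst (fun σ => x (φ σ)) κ.ord 1 := by
  letI : Module ℚ X := Module.compHom X (Rat.castHom ℝ)
  haveI htower : IsScalarTower ℚ ℝ X := inferInstance
  -- choose norming functionals together with their vanishing bounds
  have hexists : ∀ y : X, ∃ q : (X →L[ℝ] ℝ) × Ordinal.{u},
      ‖q.1‖ ≤ 1 ∧ q.1 y = ‖y‖ ∧ q.2 < κ.ord ∧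
      ∀ α, q.2 < α → α < κ.ord → q.1 (x α) = 0 := by
    intro y
    obtain ⟨g, hg1, hg2⟩ := exists_dual_vector'' ℝ y
    obtain ⟨β, hβ, hβ2⟩ := eventually_zero hreg hunc hnull g
    exact ⟨(g, β), hg1, hg2, hβ, hβ2⟩
  choose q hq1 hq2 hq3 hq4 using hexists
  let F : X → (X →L[ℝ] ℝ) := fun y => (q y).1
  let B : X → Ordinal.{u} := fun y => (q y).2
  -- the recursion
  let G : ∀ σ : Ordinal.{u}, (∀ τ, τ < σ → Ordinal.{u}) → Ordinal.{u} := fun σ IH =>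
    max (Ordinal.blsub σ IH)
      (⨆ y : (Submodule.span ℚ
          (Set.range fun τ : Set.Iio σ => x (IH τ.1 τ.2)) : Submodule ℚ X),
        Order.succ (B y))
  let φ : Ordinal.{u} → Ordinal.{u} := Ordinal.lt_wf.fix (C := fun _ => Ordinal.{u}) G
  let s : Ordinal.{u} → Set X := fun σ => Set.range fun τ : Set.Iio σ => x (φ τ.1)
  let D : Ordinal.{u} → Submodule ℚ X := fun σ => Submodule.span ℚ (s σ)
  have hφeq : ∀ σ, φ σ = max (Ordinal.blsub σ fun τ _ => φ τ)
      (⨆ y : D σ, Order.succ (B y)) := fun σ => Ordinal.lt_wf.fix_eq G σ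
  have hsmono : ∀ ⦃lam σ : Ordinal.{u}⦄, lam ≤ σ → s lam ⊆ s σ := by
    rintro lam σ h v ⟨τ, rfl⟩
    exact ⟨⟨τ.1, τ.2.trans_le h⟩, rfl⟩
  have hmono : ∀ ⦃τ σ : Ordinal.{u}⦄, τ < σ → φ τ < φ σ := by
    intro τ σ h
    calc φ τ < Ordinal.blsub σ (fun τ _ => φ τ) := Ordinal.lt_blsub _ τ h
    _ ≤ φ σ := by rw [hφeq σ]; exact le_max_left _ _
  have hBlt : ∀ σ : Ordinal.{u}, ∀ y ∈ D σ, B y < φ σ := by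
    intro σ y hy
    have h1 : Order.succ (B y) ≤ ⨆ y : D σ, Order.succ (B y) :=
      Ordinal.le_iSup _ (⟨y, hy⟩ : D σ)
    have h2 : Order.succ (B y) ≤ φ σ := by
      rw [hφeq σ]; exact h1.trans (le_max_right _ _)
    exact Order.succ_le_iff.1 h2
  have hlt : ∀ σ < κ.ord, φ σ < κ.ord := by
    intro σ
    induction σ using Ordinal.induction with
    | h σ IH =>
      intro hσ
      rw [hφeq σ]
      apply max_lt
      · apply Ordinal.blsub_lt_ord
        · rw [hreg.cof_eq]; exact Cardinal.lt_ord.1 hσ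
        · exact fun τ hτ => IH τ hτ (hτ.trans hσ)
      · apply Ordinal.iSup_lt_ord
        · rw [hreg.cof_eq]
          have hcs : #(s σ) ≤ σ.card := by
            have hss : s σ = Set.range fun i : σ.ToType =>
                x (φ ((Ordinal.ToType.mk (o := σ)).symm i).1) := by
              apply Set.ext; intro v
              constructor
              · rintro ⟨τ, rfl⟩
                exact ⟨Ordinal.ToType.mk (o := σ) τ, by simp⟩
              · rintro ⟨i, rfl⟩
                exact ⟨_, rfl⟩
            rw [hss]
            exact Cardinal.mk_range_le.trans_eq (Cardinal.mk_toType σ)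
          have h1 : #(D σ) ≤ max #(s σ) ℵ₀ := mk_qspan_le _
          exact h1.trans_lt (max_lt (hcs.trans_lt (Cardinal.lt_ord.1 hσ)) hunc)
        · intro y
          exact (Cardinal.isSuccLimit_ord hreg.aleph0_le).succ_lt (hq3 _)
  -- tail functionals vanish
  have hker : ∀ (y' : X) (lam : Ordinal.{u}), y' ∈ D lam → lam < κ.ord →
      ∀ z ∈ closedSpan ((fun σ => x (φ σ)) '' {α | lam ≤ α ∧ α < κ.ord}),
      F y' z = 0 := by
    intro y' lam hy' hlam z hz
    have hle : closedSpan ((fun σ => x (φ σ)) '' {α | lam ≤ α ∧ α < κ.ord})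
        ≤ LinearMap.ker (F y' : X →ₗ[ℝ] ℝ) := by
      apply Submodule.topologicalClosure_minimal
      · rw [Submodule.span_le]
        rintro v ⟨σ', ⟨h1, h2⟩, rfl⟩
        have hy'2 : y' ∈ D σ' := Submodule.span_mono (hsmono h1) hy'
        have := hBlt σ' y' hy'2
        exact LinearMap.mem_ker.2 (hq4 y' (φ σ') this (hlt σ' h2))
      · exact ContinuousLinearMap.isClosed_ker (F y')
    exact LinearMap.mem_ker.1 (hle hz)
  refine ⟨φ, fun a _ b _ h => hmono h, hlt, le_refl 1, ?_, ?_⟩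
  · intro α hα h0
    have h1 := hnorm (φ α) (hlt α hα)
    have h0' : x (φ α) = 0 := h0
    rw [h0', norm_zero] at h1
    exact one_ne_zero h1.symm
  · intro lam hlam y hy z hz
    rw [one_mul]
    by_contra hcon
    push_neg at hcon
    set ε := (‖y‖ - ‖y + z‖) / 3 with hε
    have hεpos : 0 < ε := by
      have := sub_pos.2 hcon
      positivity
    have himg : (fun σ => x (φ σ)) '' {α | α < lam} = s lam := by
      rw [Set.image_eq_range]; rfl
    have hyc : y ∈ closure (Submodule.span ℚ (s lam) : Set X) := by
      apply closedSpan_subset_closure_qspan (s lam)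
      rw [← himg]
      exact hy
    obtain ⟨y', hy'mem, hy'close⟩ := Metric.mem_closure_iff.1 hyc ε hεpos
    rw [dist_eq_norm] at hy'close
    have hy'D : y' ∈ D lam := hy'mem
    have hfz : F y' z = 0 := hker y' lam hy'D hlam z hz
    have h1 : ‖y‖ ≤ ‖y'‖ + ε := by
      have := norm_sub_norm_le y y'
      linarith
    have h2 : F y' y' = ‖y'‖ := hq2 y'
    have h3 : F y' y' - F y' y ≤ ε := by
      have ha : F y' y' - F y' y = F y' (y' - y) := by rw [map_sub]
      have hb : F y' (y' - y) ≤ |F y' (y' - y)| := le_abs_self _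
      have hc : |F y' (y' - y)| ≤ ‖F y'‖ * ‖y' - y‖ := (F y').le_opNorm _
      have hd : ‖F y'‖ * ‖y' - y‖ ≤ 1 * ‖y' - y‖ :=
        mul_le_mul_of_nonneg_right (hq1 y') (norm_nonneg _)
      have he : ‖y' - y‖ ≤ ε := by rw [norm_sub_rev]; exact hy'close.le
      linarith
    have h4 : F y' y = F y' (y + z) := by rw [map_add, hfz, add_zero]
    have h5 : F y' (y + z) ≤ ‖y + z‖ := by
      have hb := le_abs_self (F y' (y + z))
      have hc : |F y' (y + z)| ≤ ‖F y'‖ * ‖y + z‖ := (F y').le_opNorm _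
      have hd : ‖F y'‖ * ‖y + z‖ ≤ 1 * ‖y + z‖ :=
        mul_le_mul_of_nonneg_right (hq1 y') (norm_nonneg _)
      linarith
    linarith
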